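/- Let G be a group, H a subgroup of G, g = (g₁,…,g_n) an n-tuple in G, σ a permutation of {1,…,n}, and h = (h₁,…,h_n), h′ = (h′₁,…,h′_n) n-tuples of elements of H. Suppose that for every i ∈ {1,…,n} (indices cyclic, so g_{n+1} = g₁ and g_{σ(n+1)} = g_{σ(1)}) one has g_i⁻¹ h_i g_{i+1} = g_{σ(i)}⁻¹ h′_i g_{σ(i+1)}. Then for every i ∈ {1,…,n}, g_{σ(1)} g₁⁻¹ h₁ h₂ ⋯ h_{i-1} g_i = h′₁ h′₂ ⋯ h′_{i-1} g_{σ(i)}. In particular, if u := g_{σ(1)} g₁⁻¹ normalizes H, then H u g_i = H g_{σ(i)} for every i, i.e., left multiplication of the tuple (Hg₁,…,Hg_n) by u yields the same tuple of right H-cosets as the σ-permuted tuple (Hg_{σ(1)},…,Hg_{σ(n)}). -/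

import Mathlib

open Pointwise

private lemma stmt4_range_filter (n k : ℕ) :
    (List.range n).filter (fun m => decide (m < k)) = List.range (min k n) := by
  induction n with
  | zero => simp
  | succ n ih =>
    rw [List.range_succ, List.filter_append, ih]
    by_cases hk : n < k
    · have h1 : min k (n+1) = n+1 := by omega
      have h2 : min k n = n := by omega
      rw [h1, h2, List.range_succ]
      simp [hk]
    · have h1 : min k (n+1) = min k n := by omega
      rw [h1]
      simp [hk]

private lemma stmt4_filter_val {n : ℕ} (m : Fin n) :
    ((List.finRange n).filter (fun j => j < m)).map Fin.val = List.range m.val := by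
  have h : List.filter (fun x => decide (x < m.val)) (List.map Fin.val (List.finRange n)) =
      List.map Fin.val (List.filter ((fun x => decide (x < m.val)) ∘ Fin.val) (List.finRange n)) :=
    List.filter_map
  rw [show (List.finRange n).map Fin.val = List.range n from
    List.ext_getElem (by simp) (by simp), stmt4_range_filter] at h
  have hmin : min m.val n = m.val := by omega
  rw [hmin] at h
  rw [show (fun j : Fin n => decide (j < m)) = ((fun x => decide (x < m.val)) ∘ Fin.val)
    from by funext j; rfl]
  exact h.symm

private lemma stmt4_filter_succ {n : ℕ} (i i' : Fin n) (hi : (i' : ℕ) = (i : ℕ) + 1) :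
    (List.finRange n).filter (fun j => j < i') =
      (List.finRange n).filter (fun j => j < i) ++ [i] := by
  apply List.map_injective_iff.mpr Fin.val_injective
  rw [List.map_append, stmt4_filter_val, stmt4_filter_val, hi, List.range_succ]
  simp

private lemma stmt4_coset {G : Type*} [Group G] (H : Subgroup G) (x y : G)
    (hxy : x * y⁻¹ ∈ H) : (H : Set G) * {x} = (H : Set G) * {y} := by
  ext z
  simp only [Set.mem_mul, Set.mem_singleton_iff, SetLike.mem_coe]
  constructor
  · rintro ⟨a, ha, b, rfl, rfl⟩
    exact ⟨a * (b * y⁻¹), mul_mem ha hxy, y, rfl, by group⟩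
  · rintro ⟨a, ha, b, rfl, rfl⟩
    exact ⟨a * (x * b⁻¹)⁻¹, mul_mem ha (inv_mem hxy), x, rfl, by group⟩

/-- Let `H ≤ G`, `g : Fin n → G` an `n`-tuple, `σ` a permutation of `Fin n`
and `h, h' : Fin n → H` tuples such that the derivative of `g` along `h` equals the
derivative of the `σ`-permuted tuple along `h'` (indices cyclic):
`gᵢ⁻¹ hᵢ g_{i+1} = g_{σ(i)}⁻¹ h'ᵢ g_{σ(i+1)}` for all `i`.  Then for every `i`,
`g_{σ(0)} g₀⁻¹ h₀ ⋯ h_{i-1} gᵢ = h'₀ ⋯ h'_{i-1} g_{σ(i)}`.  In particular, if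
`u := g_{σ(0)} g₀⁻¹` normalizes `H`, then `H (u gᵢ) = H g_{σ(i)}` for every `i`. -/
theorem stmt_4 {G : Type*} [Group G] (H : Subgroup G) {n : ℕ} [NeZero n]
    (g : Fin n → G) (σ : Equiv.Perm (Fin n)) (h h' : Fin n → G)
    (hh : ∀ i, h i ∈ H) (hh' : ∀ i, h' i ∈ H)
    (hyp : ∀ i : Fin n,
      (g i)⁻¹ * h i * g (i + 1) = (g (σ i))⁻¹ * h' i * g (σ (i + 1))) :
    (∀ i : Fin n,
      g (σ 0) * (g 0)⁻¹ * (((List.finRange n).filter (fun j => j < i)).map h).prod * g i =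
        (((List.finRange n).filter (fun j => j < i)).map h').prod * g (σ i)) ∧
    (g (σ 0) * (g 0)⁻¹ ∈ Subgroup.normalizer (H : Set G) →
      ∀ i : Fin n,
        (H : Set G) * {g (σ 0) * (g 0)⁻¹ * g i} = (H : Set G) * {g (σ i)}) := by
  have main : ∀ (k : ℕ) (hk : k < n),
      g (σ 0) * (g 0)⁻¹ *
          (((List.finRange n).filter (fun j => j < (⟨k, hk⟩ : Fin n))).map h).prod *
          g ⟨k, hk⟩ =
        (((List.finRange n).filter (fun j => j < (⟨k, hk⟩ : Fin n))).map h').prod *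
          g (σ ⟨k, hk⟩) := by
    intro k
    induction k with
    | zero =>
      intro hk
      have h0 : (⟨0, hk⟩ : Fin n) = 0 := by
        ext; simp
      have hf : (List.finRange n).filter (fun j => j < (⟨0, hk⟩ : Fin n)) = [] := by
        apply List.filter_eq_nil_iff.mpr
        intro j _
        simp [Fin.lt_def]
      rw [hf, h0]
      simp
    | succ k ih =>
      intro hk
      have hk' : k < n := by omega
      set i : Fin n := ⟨k, hk'⟩
      set i' : Fin n := ⟨k + 1, hk⟩
      have hii' : i + 1 = i' := by
        ext
        simp [Fin.add_def, i, i', Nat.mod_eq_of_lt hk]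
      have e1 := hyp i
      rw [hii'] at e1
      rw [stmt4_filter_succ i i' rfl, List.map_append, List.map_append,
        List.prod_append, List.prod_append]
      simp only [List.map_cons, List.map_nil, List.prod_cons, List.prod_nil, mul_one]
      calc g (σ 0) * (g 0)⁻¹ *
            ((((List.finRange n).filter (fun j => j < i)).map h).prod * h i) * g i'
          = (g (σ 0) * (g 0)⁻¹ *
              (((List.finRange n).filter (fun j => j < i)).map h).prod * g i) *
              ((g i)⁻¹ * h i * g i') := by group
        _ = ((((List.finRange n).filter (fun j => j < i)).map h').prod * g (σ i)) *
              ((g (σ i))⁻¹ * h' i * g (σ i')) := by rw [ih hk', e1]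
        _ = (((List.finRange n).filter (fun j => j < i)).map h').prod * h' i * g (σ i') := by
              group
  have part1 : ∀ i : Fin n,
      g (σ 0) * (g 0)⁻¹ * (((List.finRange n).filter (fun j => j < i)).map h).prod * g i =
        (((List.finRange n).filter (fun j => j < i)).map h').prod * g (σ i) :=
    fun i => main i.1 i.2
  refine ⟨part1, fun hu i => ?_⟩
  set u := g (σ 0) * (g 0)⁻¹ with hu_def
  set P := (((List.finRange n).filter (fun j => j < i)).map h).prod with hP_def
  set Q := (((List.finRange n).filter (fun j => j < i)).map h').prod with hQ_def
  have hP : P ∈ H := by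
    apply H.list_prod_mem
    intro x hx
    obtain ⟨j, _, rfl⟩ := List.mem_map.mp hx
    exact hh j
  have hQ : Q ∈ H := by
    apply H.list_prod_mem
    intro x hx
    obtain ⟨j, _, rfl⟩ := List.mem_map.mp hx
    exact hh' j
  have eq1 : u * P * g i = Q * g (σ i) := part1 i
  have hm : u * g i * (g (σ i))⁻¹ = u * P⁻¹ * u⁻¹ * Q := by
    apply mul_right_cancel (b := g (σ i))
    rw [mul_assoc (u * P⁻¹ * u⁻¹), ← eq1]
    group
  apply stmt4_coset
  rw [show u * g i * (g (σ i))⁻¹ = u * g i * (g (σ i))⁻¹ from rfl, hm]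
  exact mul_mem ((Subgroup.mem_normalizer_iff.mp hu P⁻¹).mp (inv_mem hP)) hQ
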